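/- For any unitaries A,B ∈ U(2) with det A = det B, the conjugate G(A,B)† (Z⊗X) G(A,B) is a (complex) linear combination of the four matrices Z⊗X, Z⊗Y, X⊗I, Y⊗I. -/

import Mathlib

open Matrix Kronecker
noncomputable section
set_option maxHeartbeats 4000000

/-- 2×2 complex matrices -/
abbrev M2 := Matrix (Fin 2) (Fin 2) ℂ
/-- 4×4 complex matrices, indexed by two qubits -/
abbrev M4 := Matrix (Fin 2 × Fin 2) (Fin 2 × Fin 2) ℂ

/-- Pauli X -/
def PX : M2 := !![0, 1; 1, 0]
/-- Pauli Y -/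
def PY : M2 := !![0, -Complex.I; Complex.I, 0]
/-- Pauli Z -/
def PZ : M2 := !![1, 0; 0, -1]

/-- The matchgate matrix `G(A,B)`: `A` acts on the even-parity subspace
spanned by `|00⟩, |11⟩` and `B` on the odd-parity subspace spanned by
`|01⟩, |10⟩`. -/
def G (A B : M2) : M4 := fun p q =>
  if p.1 = p.2 then (if q.1 = q.2 then A p.1 q.1 else 0)
  else (if q.1 ≠ q.2 then B p.1 q.1 else 0)

theorem stmt6 (A B : M2)
    (hA : A ∈ Matrix.unitaryGroup (Fin 2) ℂ)
    (hB : B ∈ Matrix.unitaryGroup (Fin 2) ℂ)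
    (hdet : A.det = B.det) :
    (G A B)ᴴ * (PZ ⊗ₖ PX) * G A B ∈
      Submodule.span ℂ ({PZ ⊗ₖ PX, PZ ⊗ₖ PY, PX ⊗ₖ (1 : M2), PY ⊗ₖ (1 : M2)} :
        Set M4) := by
  classical
  have hA1 : Aᴴ * A = 1 := by simpa [Matrix.star_eq_conjTranspose] using hA.1
  have hB1 : Bᴴ * B = 1 := by simpa [Matrix.star_eq_conjTranspose] using hB.1
  have hΔ : A.det ≠ 0 := by
    have hu : IsUnit A := ⟨Unitary.toUnits ⟨A, hA⟩, rfl⟩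
    exact ((Matrix.isUnit_iff_isUnit_det A).mp hu).ne_zero
  have hΔB : B.det ≠ 0 := hdet ▸ hΔ
  have hadjA : A.det • Aᴴ = A.adjugate := by
    calc A.det • Aᴴ = Aᴴ * (A.det • (1 : M2)) := by
          rw [Matrix.mul_smul, Matrix.mul_one]
      _ = Aᴴ * (A * A.adjugate) := by rw [Matrix.mul_adjugate]
      _ = (Aᴴ * A) * A.adjugate := by rw [Matrix.mul_assoc]
      _ = A.adjugate := by rw [hA1, Matrix.one_mul]
  have hadjB : B.det • Bᴴ = B.adjugate := by
    calc B.det • Bᴴ = Bᴴ * (B.det • (1 : M2)) := by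
          rw [Matrix.mul_smul, Matrix.mul_one]
      _ = Bᴴ * (B * B.adjugate) := by rw [Matrix.mul_adjugate]
      _ = (Bᴴ * B) * B.adjugate := by rw [Matrix.mul_assoc]
      _ = B.adjugate := by rw [hB1, Matrix.one_mul]
  have ea00 : (starRingEnd ℂ) (A 0 0) = A 1 1 / A.det := by
    have h := congr_fun (congr_fun hadjA 0) 0
    simp [Matrix.adjugate_fin_two, Matrix.conjTranspose_apply] at h
    field_simp
    linear_combination h
  have ea01 : (starRingEnd ℂ) (A 0 1) = -A 1 0 / A.det := by
    have h := congr_fun (congr_fun hadjA 1) 0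
    simp [Matrix.adjugate_fin_two, Matrix.conjTranspose_apply] at h
    field_simp
    linear_combination h
  have ea10 : (starRingEnd ℂ) (A 1 0) = -A 0 1 / A.det := by
    have h := congr_fun (congr_fun hadjA 0) 1
    simp [Matrix.adjugate_fin_two, Matrix.conjTranspose_apply] at h
    field_simp
    linear_combination h
  have ea11 : (starRingEnd ℂ) (A 1 1) = A 0 0 / A.det := by
    have h := congr_fun (congr_fun hadjA 1) 1
    simp [Matrix.adjugate_fin_two, Matrix.conjTranspose_apply] at h
    field_simp
    linear_combination h
  rw [← hdet] at hadjB
  have eb00 : (starRingEnd ℂ) (B 0 0) = B 1 1 / A.det := by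
    have h := congr_fun (congr_fun hadjB 0) 0
    simp [Matrix.adjugate_fin_two, Matrix.conjTranspose_apply] at h
    field_simp
    linear_combination h
  have eb01 : (starRingEnd ℂ) (B 0 1) = -B 1 0 / A.det := by
    have h := congr_fun (congr_fun hadjB 1) 0
    simp [Matrix.adjugate_fin_two, Matrix.conjTranspose_apply] at h
    field_simp
    linear_combination h
  have eb10 : (starRingEnd ℂ) (B 1 0) = -B 0 1 / A.det := by
    have h := congr_fun (congr_fun hadjB 0) 1
    simp [Matrix.adjugate_fin_two, Matrix.conjTranspose_apply] at h
    field_simp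
    linear_combination h
  have eb11 : (starRingEnd ℂ) (B 1 1) = B 0 0 / A.det := by
    have h := congr_fun (congr_fun hadjB 1) 1
    simp [Matrix.adjugate_fin_two, Matrix.conjTranspose_apply] at h
    field_simp
    linear_combination h
  set α : ℂ := (A 1 1 * B 0 0 + A 0 1 * B 1 0 + B 1 1 * A 0 0 + B 0 1 * A 1 0) /
    (2 * A.det) with hα
  set β : ℂ := Complex.I * (A 1 1 * B 0 0 + A 0 1 * B 1 0 - B 1 1 * A 0 0 - B 0 1 * A 1 0) /
    (2 * A.det) with hβ
  set γ : ℂ := (A 1 1 * B 0 1 + A 0 1 * B 1 1 - B 1 0 * A 0 0 - B 0 0 * A 1 0) /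
    (2 * A.det) with hγ
  set δ : ℂ := Complex.I * (A 1 1 * B 0 1 + A 0 1 * B 1 1 + B 1 0 * A 0 0 + B 0 0 * A 1 0) /
    (2 * A.det) with hδ
  have key : (G A B)ᴴ * (PZ ⊗ₖ PX) * G A B =
      α • (PZ ⊗ₖ PX) + β • (PZ ⊗ₖ PY) + γ • (PX ⊗ₖ (1 : M2)) + δ • (PY ⊗ₖ (1 : M2)) := by
    ext ⟨i, j⟩ ⟨k, l⟩
    fin_cases i <;> fin_cases j <;> fin_cases k <;> fin_cases l <;>
      simp [Matrix.mul_apply, Fintype.sum_prod_type, Fin.sum_univ_two, G, PX, PY, PZ,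
        Matrix.kroneckerMap_apply, Matrix.conjTranspose_apply, Matrix.one_apply,
        hα, hβ, hγ, hδ, ea00, ea01, ea10, ea11, eb00, eb01, eb10, eb11] <;>
      field_simp <;> ring_nf <;> simp only [Complex.I_sq] <;> ring_nf
  rw [key]
  have m1 : (PZ ⊗ₖ PX : M4) ∈ ({PZ ⊗ₖ PX, PZ ⊗ₖ PY, PX ⊗ₖ (1 : M2), PY ⊗ₖ (1 : M2)} : Set M4) := by
    simp
  have m2 : (PZ ⊗ₖ PY : M4) ∈ ({PZ ⊗ₖ PX, PZ ⊗ₖ PY, PX ⊗ₖ (1 : M2), PY ⊗ₖ (1 : M2)} : Set M4) := by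
    simp
  have m3 : (PX ⊗ₖ (1 : M2) : M4) ∈ ({PZ ⊗ₖ PX, PZ ⊗ₖ PY, PX ⊗ₖ (1 : M2), PY ⊗ₖ (1 : M2)} : Set M4) := by
    simp
  have m4 : (PY ⊗ₖ (1 : M2) : M4) ∈ ({PZ ⊗ₖ PX, PZ ⊗ₖ PY, PX ⊗ₖ (1 : M2), PY ⊗ₖ (1 : M2)} : Set M4) := by
    simp
  exact Submodule.add_mem _
    (Submodule.add_mem _
      (Submodule.add_mem _
        (Submodule.smul_mem _ _ (Submodule.subset_span m1))
        (Submodule.smul_mem _ _ (Submodule.subset_span m2)))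
      (Submodule.smul_mem _ _ (Submodule.subset_span m3)))
    (Submodule.smul_mem _ _ (Submodule.subset_span m4))
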